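/- Let G be a connected graph with more than one end in which every block (maximal 2-connected subgraph or bridge) is a complete graph on κ vertices and every vertex lies in exactly λ blocks, with κ,λ≥2 cardinals. Then G is vertex-transitive. -/

import Mathlib

open Cardinal

/-- `B` induces a connected subgraph with no cutvertex. -/
def NoCutvertexConn {V : Type*} (G : SimpleGraph V) (B : Set V) : Prop :=
  (G.induce B).Connected ∧
    ∀ v ∈ B, (B \ {v}).Nonempty → (G.induce (B \ {v})).Connected

/-- `B` is a block of `G`: a maximal connected subgraph without a cutvertex. -/
def IsBlock {V : Type*} (G : SimpleGraph V) (B : Set V) : Prop :=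
  NoCutvertexConn G B ∧ ∀ C : Set V, B ⊆ C → NoCutvertexConn G C → B = C

namespace Stmt7

variable {V : Type*} {G : SimpleGraph V}

/-- Extract a path inside a set from connectivity of the induced subgraph. -/
lemma walk_in_set {T : Set V} (hT : (G.induce T).Connected) {a b : V} (ha : a ∈ T) (hb : b ∈ T) :
    ∃ p : G.Walk a b, p.IsPath ∧ ∀ c ∈ p.support, c ∈ T := by
  classical
  obtain ⟨q⟩ := hT ⟨a, ha⟩ ⟨b, hb⟩
  let q' : G.Walk a b := q.map (SimpleGraph.Embedding.induce T).toHom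
  refine ⟨q'.bypass, q'.bypass_isPath, fun c hc => ?_⟩
  have hc' := q'.support_bypass_subset hc
  rw [show q'.support = q.support.map (SimpleGraph.Embedding.induce T).toHom from
    SimpleGraph.Walk.support_map _ _] at hc'
  obtain ⟨⟨c2, hcT⟩, _, rfl⟩ := List.mem_map.mp hc'
  exact hcT

lemma singleton_induce_connected (v : V) : (G.induce ({v} : Set V)).Connected := by
  rw [SimpleGraph.connected_iff]
  refine ⟨fun a b => ?_, ⟨⟨v, rfl⟩⟩⟩
  have : a = b := Subsingleton.elim a b
  exact this ▸ SimpleGraph.Reachable.refl a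

lemma nocut_diff_conn {B : Set V} (h : NoCutvertexConn G B)
    (hnt : ∃ p ∈ B, ∃ q ∈ B, p ≠ q) (v : V) :
    (G.induce (B \ {v})).Connected ∧ (B \ {v}).Nonempty := by
  obtain ⟨p, hp, q, hq, hpq⟩ := hnt
  have hne : (B \ {v}).Nonempty := by
    rcases eq_or_ne p v with rfl | h'
    · exact ⟨q, hq, fun hq' => hpq (hq' ▸ rfl)⟩
    · exact ⟨p, hp, h'⟩
  by_cases hv : v ∈ B
  · exact ⟨h.2 v hv hne, hne⟩
  · refine ⟨?_, hne⟩
    rw [Set.diff_singleton_eq_self hv]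
    exact h.1


/-- Every path between two vertices of a block stays inside the block. -/
lemma path_subset_block {B : Set V} (hB : IsBlock G B)
    (hnt : ∃ p ∈ B, ∃ q ∈ B, p ≠ q) {a b : V} (p : G.Walk a b) (hp : p.IsPath)
    (ha : a ∈ B) (hb : b ∈ B) : ∀ c ∈ p.support, c ∈ B := by
  classical
  have key : B = B ∪ {c | c ∈ p.support} := by
    apply hB.2 _ Set.subset_union_left
    constructor
    · exact SimpleGraph.induce_union_connected hB.1.1.preconnected p.connected_induce_support.preconnected
        ⟨a, ha, p.start_mem_support⟩
    · intro v hv hne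
      obtain ⟨BVconn, BVne⟩ := nocut_diff_conn hB.1 hnt v
      obtain ⟨u₀, hu₀⟩ := BVne
      apply SimpleGraph.induce_connected_of_patches u₀ (by
        exact ⟨Or.inl hu₀.1, hu₀.2⟩)
      rintro w ⟨hw, (hwv : w ≠ v)⟩
      rcases hw with hwB | hwp
      · refine ⟨B \ {v}, fun c hc => ⟨Or.inl hc.1, hc.2⟩, hu₀, ⟨hwB, hwv⟩, ?_⟩
        exact BVconn.preconnected _ _
      · -- w is on the path
        simp only [Set.mem_setOf_eq] at hwp
        have hsplit : v ∉ (p.takeUntil w hwp).support ∨ v ∉ (p.dropUntil w hwp).support := by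
          by_contra hcon
          push_neg at hcon
          obtain ⟨h1, h2⟩ := hcon
          have hnodup : p.support.Nodup := hp.support_nodup
          rw [← p.take_spec hwp, SimpleGraph.Walk.support_append] at hnodup
          rw [List.nodup_append] at hnodup
          have h2' : v ∈ (p.dropUntil w hwp).support.tail := by
            have hcons := (p.dropUntil w hwp).support_eq_cons
            rw [hcons] at h2
            rcases List.mem_cons.mp h2 with h | h
            · exact absurd h.symm hwv
            · exact h
          exact hnodup.2.2 v h1 v h2' rfl
        rcases hsplit with hnv | hnv
        · set q := p.takeUntil w hwp with hq
          have hqsub : ∀ c ∈ q.support, c ∈ p.support := fun c hc => p.support_takeUntil_subset hwp hc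
          have hane : a ≠ v := fun h => hnv (h ▸ q.start_mem_support)
          refine ⟨(B \ {v}) ∪ {c | c ∈ q.support}, ?_, Or.inl hu₀, Or.inr q.end_mem_support, ?_⟩
          · rintro c (hc | hc)
            · exact ⟨Or.inl hc.1, hc.2⟩
            · exact ⟨Or.inr (hqsub c hc), fun h => hnv (h ▸ hc)⟩
          · apply SimpleGraph.Connected.preconnected
            exact SimpleGraph.induce_union_connected BVconn.preconnected q.connected_induce_support.preconnected
              ⟨a, ⟨ha, hane⟩, q.start_mem_support⟩
        · set r := p.dropUntil w hwp with hr
          have hrsub : ∀ c ∈ r.support, c ∈ p.support := fun c hc => p.support_dropUntil_subset hwp hc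
          have hbne : b ≠ v := fun h => hnv (h ▸ r.end_mem_support)
          refine ⟨(B \ {v}) ∪ {c | c ∈ r.support}, ?_, Or.inl hu₀, Or.inr r.start_mem_support, ?_⟩
          · rintro c (hc | hc)
            · exact ⟨Or.inl hc.1, hc.2⟩
            · exact ⟨Or.inr (hrsub c hc), fun h => hnv (h ▸ hc)⟩
          · apply SimpleGraph.Connected.preconnected
            exact SimpleGraph.induce_union_connected BVconn.preconnected r.connected_induce_support.preconnected
              ⟨b, ⟨hb, hbne⟩, r.end_mem_support⟩
  intro c hc
  rw [key]
  exact Or.inr hc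

/-- Two blocks sharing two distinct vertices are equal. -/
lemma blocks_eq_of_two {B C : Set V} (hB : IsBlock G B) (hC : IsBlock G C)
    (hntB : ∃ p ∈ B, ∃ q ∈ B, p ≠ q) (hntC : ∃ p ∈ C, ∃ q ∈ C, p ≠ q)
    {p q : V} (hpB : p ∈ B) (hpC : p ∈ C) (hqB : q ∈ B) (hqC : q ∈ C) (hpq : p ≠ q) :
    B = C := by
  have hunion : NoCutvertexConn G (B ∪ C) := by
    constructor
    · exact SimpleGraph.induce_union_connected hB.1.1.preconnected hC.1.1.preconnected ⟨p, hpB, hpC⟩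
    · intro v hv hne
      obtain ⟨hBc, hBn⟩ := nocut_diff_conn hB.1 hntB v
      obtain ⟨hCc, hCn⟩ := nocut_diff_conn hC.1 hntC v
      have : (B ∪ C) \ {v} = (B \ {v}) ∪ (C \ {v}) := by
        ext c; simp [Set.mem_diff, Set.mem_union]; tauto
      rw [this]
      apply SimpleGraph.induce_union_connected hBc.preconnected hCc.preconnected
      rcases eq_or_ne p v with rfl | h'
      · exact ⟨q, ⟨hqB, hpq.symm⟩, ⟨hqC, hpq.symm⟩⟩
      · exact ⟨p, ⟨hpB, h'⟩, ⟨hpC, h'⟩⟩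
  have h1 := hB.2 _ Set.subset_union_left hunion
  have h2 := hC.2 _ Set.subset_union_right hunion
  exact h1.trans h2.symm


/-- The bundled local hypotheses on the graph. -/
structure Setting (G : SimpleGraph V) : Prop where
  nt : ∀ ⦃B : Set V⦄, IsBlock G B → ∃ p ∈ B, ∃ q ∈ B, p ≠ q
  complete : ∀ ⦃B : Set V⦄, IsBlock G B → ∀ ⦃u⦄, u ∈ B → ∀ ⦃v⦄, v ∈ B → u ≠ v → G.Adj u v
  card : ∀ ⦃B C : Set V⦄, IsBlock G B → IsBlock G C → Nonempty (↥B ≃ ↥C)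
  locs : ∀ x y : V,
    Nonempty ({B : Set V // IsBlock G B ∧ x ∈ B} ≃ {B : Set V // IsBlock G B ∧ y ∈ B})
  two : ∀ z : V, ∃ B C : Set V, (IsBlock G B ∧ z ∈ B) ∧ (IsBlock G C ∧ z ∈ C) ∧ B ≠ C

namespace Setting
variable (HS : Setting G)
include HS

lemma blocks_eq {B C : Set V} (hB : IsBlock G B) (hC : IsBlock G C)
    {p q : V} (hpB : p ∈ B) (hpC : p ∈ C) (hqB : q ∈ B) (hqC : q ∈ C) (hpq : p ≠ q) : B = C :=
  blocks_eq_of_two hB hC (HS.nt hB) (HS.nt hC) hpB hpC hqB hqC hpq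

/-- One-step ear contradiction: a vertex `z` of a block `D` outside a connected set `T`
cannot have a neighbor `w ∈ T` outside `D`, if `D` meets `T` at `x`. -/
lemma no_ear0 {D T : Set V} (hD : IsBlock G D) (hT : (G.induce T).Connected)
    {z w x : V} (hz : z ∈ D) (hzT : z ∉ T) (hw : w ∉ D) (hwT : w ∈ T)
    (hx : x ∈ D) (hxT : x ∈ T) (azw : G.Adj z w) : False := by
  obtain ⟨pw, hpw, hpwT⟩ := walk_in_set hT hwT hxT
  have hzs : z ∉ pw.support := fun h => hzT (hpwT z h)
  have hpath : (SimpleGraph.Walk.cons azw pw).IsPath := hpw.cons hzs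
  have := path_subset_block hD (HS.nt hD) _ hpath hz hx w (by simp)
  exact hw this

/-- Two-step ear contradiction. -/
lemma no_ear {D T : Set V} (hD : IsBlock G D) (hT : (G.induce T).Connected)
    {z q w x : V} (hz : z ∈ D) (hzT : z ∉ T) (hq : q ∉ D) (hqT : q ∉ T)
    (hw : w ∈ T) (hx : x ∈ D) (hxT : x ∈ T)
    (azq : G.Adj z q) (aqw : G.Adj q w) : False := by
  obtain ⟨pw, hpw, hpwT⟩ := walk_in_set hT hw hxT
  have hqs : q ∉ pw.support := fun h => hqT (hpwT q h)
  have hzs : z ∉ (SimpleGraph.Walk.cons aqw pw).support := by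
    rw [SimpleGraph.Walk.support_cons]
    intro h
    rcases List.mem_cons.mp h with h | h
    · exact azq.ne h
    · exact hzT (hpwT z h)
  have hpath : (SimpleGraph.Walk.cons azq (SimpleGraph.Walk.cons aqw pw)).IsPath :=
    (hpw.cons hqs).cons hzs
  have := path_subset_block hD (HS.nt hD) _ hpath hz hx q (by simp)
  exact hq this

/-- Key separation: two distinct blocks both meeting a connected set `T`
can only meet each other inside `T`. -/
lemma sep {B C T : Set V} (hB : IsBlock G B) (hC : IsBlock G C) (hBC : B ≠ C)
    (hT : (G.induce T).Connected) {x w p : V} (hx : x ∈ B ∩ T) (hw : w ∈ C ∩ T)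
    (hp : p ∈ B ∩ C) : p ∈ T := by
  by_contra hpT
  have hwB : w ∉ B := by
    intro hwB
    exact hBC (HS.blocks_eq hB hC hp.1 hp.2 hwB hw.1 (fun h => hpT (h ▸ hw.2)))
  have hpw : G.Adj p w := HS.complete hC hp.2 hw.1 (fun h => hpT (h ▸ hw.2))
  exact HS.no_ear0 hB hT hp.1 hpT hwB hw.2 hx.1 hx.2 hpw

end Setting

/-- A block through each edge, via Zorn's lemma. -/
lemma block_of_edge {x y : V} (hxy : G.Adj x y) :
    ∃ B : Set V, IsBlock G B ∧ x ∈ B ∧ y ∈ B := by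
  classical
  set S : Set (Set V) := {C | NoCutvertexConn G C ∧ x ∈ C ∧ y ∈ C} with hS
  have hseed : ({x, y} : Set V) ∈ S := by
    refine ⟨⟨SimpleGraph.induce_pair_connected_of_adj hxy, ?_⟩, by simp, by simp⟩
    intro v hv hne
    rcases hv with rfl | rfl
    · rw [Set.pair_diff_left hxy.ne]
      exact singleton_induce_connected y
    · rw [Set.pair_diff_right hxy.ne]
      exact singleton_induce_connected x
  have hchain : ∀ c ⊆ S, IsChain (· ⊆ ·) c → c.Nonempty → ∃ ub ∈ S, ∀ s ∈ c, s ⊆ ub := by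
    intro c hcS hchain hcne
    refine ⟨⋃₀ c, ⟨⟨?_, ?_⟩, ?_, ?_⟩, fun s hs => Set.subset_sUnion_of_mem hs⟩
    · apply SimpleGraph.induce_sUnion_connected_of_pairwise_not_disjoint hcne
      · intro s t hs ht
        exact ⟨x, (hcS hs).2.1, (hcS ht).2.1⟩
      · intro s hs
        exact (hcS hs).1.1
    · intro v hv hne
      have himg : (⋃₀ c) \ {v} = ⋃₀ ((fun s => s \ {v}) '' c) := by
        ext z
        simp only [Set.mem_diff, Set.mem_sUnion, Set.mem_image, Set.mem_singleton_iff]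
        constructor
        · rintro ⟨⟨s, hs, hzs⟩, hzv⟩
          exact ⟨s \ {v}, ⟨s, hs, rfl⟩, hzs, hzv⟩
        · rintro ⟨_, ⟨s, hs, rfl⟩, hzs, hzv⟩
          exact ⟨⟨s, hs, hzs⟩, hzv⟩
      rw [himg]
      apply SimpleGraph.induce_sUnion_connected_of_pairwise_not_disjoint
      · obtain ⟨s, hs⟩ := hcne
        exact ⟨s \ {v}, ⟨s, hs, rfl⟩⟩
      · rintro s t ⟨s', hs', rfl⟩ ⟨t', ht', rfl⟩
        have h1 := (hcS hs').2
        have h2 := (hcS ht').2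
        rcases eq_or_ne x v with rfl | h'
        · exact ⟨y, ⟨h1.2, hxy.ne'⟩, ⟨h2.2, hxy.ne'⟩⟩
        · exact ⟨x, ⟨h1.1, h'⟩, ⟨h2.1, h'⟩⟩
      · rintro s ⟨s', hs', rfl⟩
        exact (nocut_diff_conn (hcS hs').1 ⟨x, (hcS hs').2.1, y, (hcS hs').2.2, hxy.ne⟩ v).1
    · obtain ⟨s, hs⟩ := hcne
      exact Set.mem_sUnion.mpr ⟨s, hs, (hcS hs).2.1⟩
    · obtain ⟨s, hs⟩ := hcne
      exact Set.mem_sUnion.mpr ⟨s, hs, (hcS hs).2.2⟩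
  obtain ⟨m, hsub, hmax⟩ := zorn_subset_nonempty S hchain _ hseed
  refine ⟨m, ⟨hmax.1.1, ?_⟩, hmax.1.2.1, hmax.1.2.2⟩
  intro C hmC hC
  exact Set.Subset.antisymm hmC (hmax.2 ⟨hC, hmC hmax.1.2.1, hmC hmax.1.2.2⟩ hmC)


lemma equiv_point (h : Nonempty (α ≃ β)) (a : α) (b : β) : ∃ e : α ≃ β, e a = b := by
  classical
  obtain ⟨e⟩ := h
  exact ⟨e.trans (Equiv.swap (e a) b), by simp⟩

lemma free_equiv_all (h : Nonempty (α ≃ β)) (P : α → Prop) (P' : β → Prop)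
    (hP : ∀ a, P a) (hP' : ∀ b, P' b) :
    Nonempty ({a : α // ¬ P a} ≃ {b : β // ¬ P' b}) := by
  have h1 : IsEmpty {a : α // ¬ P a} := ⟨fun a => a.2 (hP a.1)⟩
  have h2 : IsEmpty {b : β // ¬ P' b} := ⟨fun b => b.2 (hP' b.1)⟩
  exact ⟨Equiv.equivOfIsEmpty _ _⟩

lemma free_equiv_sub (h : Nonempty (α ≃ β)) (P : α → Prop) (P' : β → Prop)
    (hP : ∀ a a', P a → P a' → a = a') (hP' : ∀ b b', P' b → P' b' → b = b')
    (hiff : (∃ a, P a) ↔ (∃ b, P' b)) :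
    Nonempty ({a : α // ¬ P a} ≃ {b : β // ¬ P' b}) := by
  classical
  by_cases hex : ∃ a, P a
  · obtain ⟨a₀, ha₀⟩ := hex
    obtain ⟨b₀, hb₀⟩ := hiff.mp ⟨a₀, ha₀⟩
    obtain ⟨e, he⟩ := equiv_point h a₀ b₀
    refine ⟨Equiv.subtypeEquiv e fun a => not_congr ⟨fun hPa => ?_, fun hPb => ?_⟩⟩
    · rw [hP a a₀ hPa ha₀, he]; exact hb₀
    · have : e a = e a₀ := by rw [he]; exact hP' _ _ hPb hb₀
      rw [e.injective this]; exact ha₀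
  · obtain ⟨e⟩ := h
    refine ⟨Equiv.subtypeEquiv e fun a => ⟨fun _ hPb => ?_, fun _ hPa => hex ⟨a, hPa⟩⟩⟩
    exact hex (hiff.mpr ⟨e a, hPb⟩)


/-- Blocks attached to but not inside `T`. -/
def NB (G : SimpleGraph V) (T : Set V) : Set (Set V) :=
  {B | IsBlock G B ∧ (B ∩ T).Nonempty ∧ ¬ B ⊆ T}

/-- `T` together with all blocks attached to it. -/
def extSet (G : SimpleGraph V) (T : Set V) : Set V := T ∪ ⋃₀ NB G T

section Ext
variable {T : Set V}

lemma nb_att (hTclosed : ∀ ⦃B : Set V⦄, IsBlock G B → ∀ ⦃p q : V⦄, p ∈ B → q ∈ B → p ≠ q →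
      p ∈ T → q ∈ T → B ⊆ T) {B : Set V} (hB : B ∈ NB G T) : ∃ x, B ∩ T = {x} := by
  obtain ⟨x, hx⟩ := hB.2.1
  refine ⟨x, Set.eq_singleton_iff_unique_mem.mpr ⟨hx, fun y hy => ?_⟩⟩
  by_contra hyx
  exact hB.2.2 (hTclosed hB.1 hy.1 hx.1 hyx hy.2 hx.2)

lemma nb_unique (HS : Setting G) (hTconn : (G.induce T).Connected) {B C : Set V} (hB : B ∈ NB G T) (hC : C ∈ NB G T)
    {z : V} (hzB : z ∈ B) (hzC : z ∈ C) (hzT : z ∉ T) : B = C := by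
  by_contra hBC
  obtain ⟨x, hx⟩ := hB.2.1
  obtain ⟨w, hw⟩ := hC.2.1
  exact hzT (HS.sep hB.1 hC.1 hBC hTconn hx hw ⟨hzB, hzC⟩)

lemma ext_mem_T : T ⊆ extSet G T := Set.subset_union_left

lemma nb_sub_ext {B : Set V} (hB : B ∈ NB G T) : B ⊆ extSet G T :=
  fun z hz => Or.inr (Set.mem_sUnion.mpr ⟨B, hB, hz⟩)

lemma ext_conn (HS : Setting G) (hTconn : (G.induce T).Connected) (hTne : T.Nonempty) : (G.induce (extSet G T)).Connected := by
  obtain ⟨u₀, hu₀⟩ := hTne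
  apply SimpleGraph.induce_connected_of_patches u₀ (ext_mem_T hu₀)
  intro w hw
  rcases hw with hwT | hwN
  · exact ⟨T, ext_mem_T, hu₀, hwT, hTconn.preconnected _ _⟩
  · obtain ⟨B, hB, hwB⟩ := Set.mem_sUnion.mp hwN
    obtain ⟨x, hxB, hxT⟩ := hB.2.1
    refine ⟨T ∪ B, Set.union_subset ext_mem_T (nb_sub_ext hB), Or.inl hu₀, Or.inr hwB, ?_⟩
    exact (SimpleGraph.induce_union_connected hTconn.preconnected hB.1.1.1.preconnected ⟨x, hxT, hxB⟩).preconnected _ _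

/-- Core exclusion: a block cannot pick up two outside-vertices from two
distinct attached blocks. -/
lemma nb_excl (HS : Setting G) (hTconn : (G.induce T).Connected)
    (hTclosed : ∀ ⦃B : Set V⦄, IsBlock G B → ∀ ⦃p q : V⦄, p ∈ B → q ∈ B → p ≠ q →
      p ∈ T → q ∈ T → B ⊆ T) {B D₁ D₂ : Set V} (hB : IsBlock G B) (hD₁ : D₁ ∈ NB G T) (hD₂ : D₂ ∈ NB G T)
    (hD : D₁ ≠ D₂) {p q : V} (hp : p ∈ B ∩ D₁) (hq : q ∈ B ∩ D₂)
    (hpT : p ∉ T) (hqT : q ∉ T) (hpq : p ≠ q) : False := by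
  have hqD₁ : q ∉ D₁ := fun h => hD (nb_unique HS hTconn hD₁ hD₂ h hq.2 hqT)
  have hpD₂ : p ∉ D₂ := fun h => hD (nb_unique HS hTconn hD₁ hD₂ hp.2 h hpT)
  obtain ⟨x₁, hx₁⟩ := nb_att hTclosed hD₁
  obtain ⟨x₂, hx₂⟩ := nb_att hTclosed hD₂
  have hx₁m : x₁ ∈ D₁ ∩ T := by rw [hx₁]; exact rfl
  have hx₂m : x₂ ∈ D₂ ∩ T := by rw [hx₂]; exact rfl
  have apq : G.Adj p q := HS.complete hB hp.1 hq.1 hpq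
  have aqx₂ : G.Adj q x₂ := HS.complete hD₂.1 hq.2 hx₂m.1 (fun h => hqT (h ▸ hx₂m.2))
  exact HS.no_ear hD₁.1 hTconn hp.2 hpT hqD₁ hqT hx₂m.2 hx₁m.1 hx₁m.2 apq aqx₂

lemma ext_closed (HS : Setting G) (hTconn : (G.induce T).Connected)
    (hTclosed : ∀ ⦃B : Set V⦄, IsBlock G B → ∀ ⦃p q : V⦄, p ∈ B → q ∈ B → p ≠ q →
      p ∈ T → q ∈ T → B ⊆ T) {B : Set V} (hB : IsBlock G B) {p q : V} (hpB : p ∈ B) (hqB : q ∈ B)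
    (hpq : p ≠ q) (hp : p ∈ extSet G T) (hq : q ∈ extSet G T) : B ⊆ extSet G T := by
  by_cases hpT : p ∈ T
  · by_cases hqT : q ∈ T
    · exact (hTclosed hB hpB hqB hpq hpT hqT).trans (ext_mem_T)
    · obtain ⟨D, hD, hqD⟩ := Set.mem_sUnion.mp (hq.resolve_left hqT)
      by_cases hpD : p ∈ D
      · rw [HS.blocks_eq hB hD.1 hpB hpD hqB hqD hpq]
        exact nb_sub_ext hD
      · exfalso
        have hBD : D ≠ B := fun h => hpD (h.symm ▸ hpB)
        obtain ⟨x, hx⟩ := nb_att hTclosed hD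
        have hxm : x ∈ D ∩ T := by rw [hx]; exact rfl
        exact hqT (HS.sep hD.1 hB hBD hTconn hxm ⟨hpB, hpT⟩ ⟨hqD, hqB⟩)
  · obtain ⟨D, hD, hpD⟩ := Set.mem_sUnion.mp (hp.resolve_left hpT)
    by_cases hqT : q ∈ T
    · by_cases hqD : q ∈ D
      · rw [HS.blocks_eq hB hD.1 hpB hpD hqB hqD hpq]
        exact nb_sub_ext hD
      · exfalso
        have hBD : D ≠ B := fun h => hqD (h.symm ▸ hqB)
        obtain ⟨x, hx⟩ := nb_att hTclosed hD
        have hxm : x ∈ D ∩ T := by rw [hx]; exact rfl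
        exact hpT (HS.sep hD.1 hB hBD hTconn hxm ⟨hqB, hqT⟩ ⟨hpD, hpB⟩)
    · obtain ⟨D₂, hD₂, hqD₂⟩ := Set.mem_sUnion.mp (hq.resolve_left hqT)
      rcases eq_or_ne D D₂ with rfl | hDne
      · rw [HS.blocks_eq hB hD.1 hpB hpD hqB hqD₂ hpq]
        exact nb_sub_ext hD
      · exact (nb_excl HS hTconn hTclosed hB hD hD₂ hDne ⟨hpB, hpD⟩ ⟨hqB, hqD₂⟩
          hpT hqT hpq).elim

lemma ext_block_sub (HS : Setting G) (hTconn : (G.induce T).Connected)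
    (hTclosed : ∀ ⦃B : Set V⦄, IsBlock G B → ∀ ⦃p q : V⦄, p ∈ B → q ∈ B → p ≠ q →
      p ∈ T → q ∈ T → B ⊆ T) {B : Set V} (hB : IsBlock G B) (hsub : B ⊆ extSet G T) :
    B ⊆ T ∨ B ∈ NB G T := by
  by_cases hBT : B ⊆ T
  · exact Or.inl hBT
  right
  refine ⟨hB, ?_, hBT⟩
  by_contra hint
  rw [Set.not_nonempty_iff_eq_empty] at hint
  obtain ⟨z, hzB, hz'⟩ : ∃ z ∈ B, z ∉ T := by
    by_contra h
    push_neg at h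
    exact hBT h
  obtain ⟨p₀, hp₀, q₀, hq₀, hne₀⟩ := HS.nt hB
  obtain ⟨q, hqB, hqz⟩ : ∃ q ∈ B, q ≠ z := by
    rcases eq_or_ne p₀ z with rfl | h
    · exact ⟨q₀, hq₀, fun h => hne₀ h.symm⟩
    · exact ⟨p₀, hp₀, h⟩
  have hqT : q ∉ T := fun h => (Set.eq_empty_iff_forall_notMem.mp hint q) ⟨hqB, h⟩
  obtain ⟨D, hD, hzD⟩ := Set.mem_sUnion.mp ((hsub hzB).resolve_left hz')
  obtain ⟨D₂, hD₂, hqD₂⟩ := Set.mem_sUnion.mp ((hsub hqB).resolve_left hqT)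
  rcases eq_or_ne D D₂ with rfl | hDne
  · have hBD : B = D := HS.blocks_eq hB hD.1 hzB hzD hqB hqD₂ (fun h => hqz h.symm)
    obtain ⟨y, hy⟩ := hD.2.1
    refine (Set.eq_empty_iff_forall_notMem.mp hint y) ?_
    rw [hBD]
    exact hy
  · exact (nb_excl HS hTconn hTclosed hB hD hD₂ hDne ⟨hzB, hzD⟩ ⟨hqB, hqD₂⟩
      hz' hqT (fun h => hqz h.symm)).elim

lemma ext_interior {B : Set V} (hB : IsBlock G B) {x : V} (hxB : x ∈ B) (hxT : x ∈ T) :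
    B ⊆ extSet G T := by
  by_cases hBT : B ⊆ T
  · exact hBT.trans ext_mem_T
  · exact nb_sub_ext ⟨hB, ⟨x, hxB, hxT⟩, hBT⟩

lemma ext_frontier (HS : Setting G) (hTconn : (G.induce T).Connected)
    (hTclosed : ∀ ⦃B : Set V⦄, IsBlock G B → ∀ ⦃p q : V⦄, p ∈ B → q ∈ B → p ≠ q →
      p ∈ T → q ∈ T → B ⊆ T) {z : V} (hz : z ∈ extSet G T) (hzT : z ∉ T)
    {B C : Set V} (hB : IsBlock G B) (hC : IsBlock G C) (hzB : z ∈ B) (hzC : z ∈ C)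
    (hBs : B ⊆ extSet G T) (hCs : C ⊆ extSet G T) : B = C := by
  have h1 := (ext_block_sub HS hTconn hTclosed hB hBs).resolve_left (fun h => hzT (h hzB))
  have h2 := (ext_block_sub HS hTconn hTclosed hC hCs).resolve_left (fun h => hzT (h hzC))
  exact nb_unique HS hTconn h1 h2 hzB hzC hzT

lemma ext_not_interior (HS : Setting G) (hTconn : (G.induce T).Connected)
    (hTclosed : ∀ ⦃B : Set V⦄, IsBlock G B → ∀ ⦃p q : V⦄, p ∈ B → q ∈ B → p ≠ q →
      p ∈ T → q ∈ T → B ⊆ T) {z : V} (hz : z ∈ extSet G T) (hzT : z ∉ T) :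
    ∃ C : Set V, IsBlock G C ∧ z ∈ C ∧ ¬ C ⊆ extSet G T := by
  obtain ⟨D, hD, hzD⟩ := Set.mem_sUnion.mp (hz.resolve_left hzT)
  obtain ⟨B, C, ⟨hBb, hzB⟩, ⟨hCb, hzC⟩, hBC⟩ := HS.two z
  rcases eq_or_ne B D with rfl | hne
  · refine ⟨C, hCb, hzC, fun hsub => ?_⟩
    exact hBC (ext_frontier HS hTconn hTclosed hz hzT hBb hCb hzB hzC (nb_sub_ext hD) hsub)
  · refine ⟨B, hBb, hzB, fun hsub => ?_⟩
    exact hne (ext_frontier HS hTconn hTclosed hz hzT hBb hD.1 hzB hzD hsub (nb_sub_ext hD))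

end Ext

/-- A partial isomorphism of `G`, with block-closed connected domain. -/
structure PIso (G : SimpleGraph V) where
  S : Set V
  f : V → V
  conn : (G.induce S).Connected
  conn' : (G.induce (f '' S)).Connected
  inj : Set.InjOn f S
  closed : ∀ ⦃B : Set V⦄, IsBlock G B → ∀ ⦃p q : V⦄, p ∈ B → q ∈ B → p ≠ q →
    p ∈ S → q ∈ S → B ⊆ S
  closed' : ∀ ⦃B : Set V⦄, IsBlock G B → ∀ ⦃p q : V⦄, p ∈ B → q ∈ B → p ≠ q →
    p ∈ f '' S → q ∈ f '' S → B ⊆ f '' S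
  blk : ∀ ⦃B : Set V⦄, IsBlock G B → B ⊆ S → IsBlock G (f '' B)
  blk' : ∀ ⦃B' : Set V⦄, IsBlock G B' → B' ⊆ f '' S →
    ∃ B, IsBlock G B ∧ B ⊆ S ∧ f '' B = B'
  frontier : ∀ ⦃x⦄, x ∈ S → (∀ ⦃B⦄, IsBlock G B → x ∈ B → B ⊆ S) ∨
    (∀ ⦃B C : Set V⦄, IsBlock G B → IsBlock G C → x ∈ B → x ∈ C → B ⊆ S → C ⊆ S → B = C)
  sync : ∀ ⦃x⦄, x ∈ S → ((∀ ⦃B⦄, IsBlock G B → x ∈ B → B ⊆ S) ↔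
    (∀ ⦃B'⦄, IsBlock G B' → f x ∈ B' → B' ⊆ f '' S))

namespace PIso
variable (P : PIso G)

lemma pull {B' : Set V} (hB' : IsBlock G B') (hsub : B' ⊆ P.f '' P.S)
    {x : V} (hx : x ∈ P.S) (hfx : P.f x ∈ B') :
    ∃ B, IsBlock G B ∧ x ∈ B ∧ B ⊆ P.S ∧ P.f '' B = B' := by
  obtain ⟨B, hB, hBS, hBi⟩ := P.blk' hB' hsub
  have : P.f x ∈ P.f '' B := hBi ▸ hfx
  obtain ⟨p, hpB, hpf⟩ := this
  have : p = x := P.inj (hBS hpB) hx hpf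
  exact ⟨B, hB, this ▸ hpB, hBS, hBi⟩

theorem extend (HS : Setting G) (P : PIso G) :
    ∃ Q : PIso G, P.S ⊆ Q.S ∧ (∀ x ∈ P.S, Q.f x = P.f x) ∧
      (∀ ⦃B : Set V⦄, IsBlock G B → (B ∩ P.S).Nonempty → B ⊆ Q.S) ∧
      (∀ ⦃B' : Set V⦄, IsBlock G B' → (B' ∩ (P.f '' P.S)).Nonempty → B' ⊆ Q.f '' Q.S) := by
  classical
  obtain ⟨⟨u₀, hu₀⟩⟩ := P.conn.nonempty
  -- attach points
  have hattex : ∀ B : Set V, ∃ x, B ∈ NB G P.S → B ∩ P.S = {x} := by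
    intro B
    by_cases hB : B ∈ NB G P.S
    · obtain ⟨x, hx⟩ := nb_att P.closed hB
      exact ⟨x, fun _ => hx⟩
    · exact ⟨u₀, fun h => absurd h hB⟩
  choose att hattspec using hattex
  have hattB : ∀ ⦃B⦄, B ∈ NB G P.S → att B ∈ B := by
    intro B hB
    have : att B ∈ B ∩ P.S := by rw [hattspec B hB]; exact rfl
    exact this.1
  have hattS : ∀ ⦃B⦄, B ∈ NB G P.S → att B ∈ P.S := by
    intro B hB
    have : att B ∈ B ∩ P.S := by rw [hattspec B hB]; exact rfl
    exact this.2
  have hatt_eq : ∀ ⦃B⦄, B ∈ NB G P.S → ∀ ⦃y⦄, y ∈ B → y ∈ P.S → y = att B := by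
    intro B hB y hyB hyS
    have : y ∈ B ∩ P.S := ⟨hyB, hyS⟩
    rw [hattspec B hB] at this
    exact this
  -- the per-vertex free-block matchings
  have hψex : ∀ x : V, ∃ ψ : Set V → Set V,
      x ∈ P.S →
      (∀ ⦃B⦄, IsBlock G B → x ∈ B → ¬ B ⊆ P.S →
          IsBlock G (ψ B) ∧ P.f x ∈ ψ B ∧ ¬ ψ B ⊆ P.f '' P.S) ∧
      (∀ ⦃B C⦄, IsBlock G B → x ∈ B → ¬ B ⊆ P.S → IsBlock G C → x ∈ C → ¬ C ⊆ P.S →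
          ψ B = ψ C → B = C) ∧
      (∀ ⦃B'⦄, IsBlock G B' → P.f x ∈ B' → ¬ B' ⊆ P.f '' P.S →
          ∃ B, IsBlock G B ∧ x ∈ B ∧ ¬ B ⊆ P.S ∧ ψ B = B') := by
    intro x
    by_cases hx : x ∈ P.S
    swap
    · exact ⟨fun _ => ∅, fun h => absurd h hx⟩
    have hne : Nonempty ({Bl : {B : Set V // IsBlock G B ∧ x ∈ B} // ¬ (Bl : Set V) ⊆ P.S} ≃
        {Bl : {B : Set V // IsBlock G B ∧ P.f x ∈ B} // ¬ (Bl : Set V) ⊆ P.f '' P.S}) := by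
      rcases P.frontier hx with hint | hsub
      · exact free_equiv_all (HS.locs x (P.f x)) _ _
          (fun Bl => hint Bl.2.1 Bl.2.2)
          (fun Bl => (P.sync hx).mp hint Bl.2.1 Bl.2.2)
      · apply free_equiv_sub (HS.locs x (P.f x)) _ _
        · exact fun a a' ha ha' => Subtype.ext (hsub a.2.1 a'.2.1 a.2.2 a'.2.2 ha ha')
        · intro b b' hb hb'
          obtain ⟨B, hB, hxB, hBS, hBi⟩ := P.pull b.2.1 hb hx b.2.2
          obtain ⟨C, hC, hxC, hCS, hCi⟩ := P.pull b'.2.1 hb' hx b'.2.2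
          have : B = C := hsub hB hC hxB hxC hBS hCS
          exact Subtype.ext (by rw [← hBi, ← hCi, this])
        · constructor
          · rintro ⟨a, ha⟩
            exact ⟨⟨P.f '' a.1, P.blk a.2.1 ha, ⟨x, a.2.2, rfl⟩⟩,
              Set.image_mono ha⟩
          · rintro ⟨b, hb⟩
            obtain ⟨B, hB, hxB, hBS, hBi⟩ := P.pull b.2.1 hb hx b.2.2
            exact ⟨⟨B, hB, hxB⟩, hBS⟩
    obtain ⟨e⟩ := hne
    refine ⟨fun B => if h : IsBlock G B ∧ x ∈ B ∧ ¬ B ⊆ P.S then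
      ((e ⟨⟨B, h.1, h.2.1⟩, h.2.2⟩ : {Bl : {B : Set V // IsBlock G B ∧ P.f x ∈ B} //
        ¬ (Bl : Set V) ⊆ P.f '' P.S}) : Set V) else ∅, fun _ => ⟨?_, ?_, ?_⟩⟩
    · intro B hB hxB hBS
      simp only [dif_pos (⟨hB, hxB, hBS⟩ : IsBlock G B ∧ x ∈ B ∧ ¬ B ⊆ P.S)]
      exact ⟨(e _).1.2.1, (e _).1.2.2, (e _).2⟩
    · intro B C hB hxB hBS hC hxC hCS heq
      simp only [dif_pos (⟨hB, hxB, hBS⟩ : IsBlock G B ∧ x ∈ B ∧ ¬ B ⊆ P.S),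
        dif_pos (⟨hC, hxC, hCS⟩ : IsBlock G C ∧ x ∈ C ∧ ¬ C ⊆ P.S)] at heq
      have := e.injective (Subtype.ext (Subtype.ext heq))
      exact congrArg (fun (z : {Bl : {B : Set V // IsBlock G B ∧ x ∈ B} //
        ¬ (Bl : Set V) ⊆ P.S}) => (z : Set V)) this
    · intro B' hB' hfx hS'
      set a := e.symm ⟨⟨B', hB', hfx⟩, hS'⟩ with ha
      refine ⟨(a : Set V), a.1.2.1, a.1.2.2, a.2, ?_⟩
      simp only [dif_pos (⟨a.1.2.1, a.1.2.2, a.2⟩ :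
        IsBlock G (a : Set V) ∧ x ∈ (a : Set V) ∧ ¬ (a : Set V) ⊆ P.S)]
      have harg : (⟨⟨(a : Set V), a.1.2.1, a.1.2.2⟩, a.2⟩ : {Bl : {B : Set V //
          IsBlock G B ∧ x ∈ B} // ¬ (Bl : Set V) ⊆ P.S}) = a :=
        Subtype.ext (Subtype.ext rfl)
      rw [harg, ha, Equiv.apply_symm_apply]
  choose ψ hψ using hψex
  set tgt : Set V → Set V := fun B => ψ (att B) B with htgtdef
  have hNBelem : ∀ ⦃B⦄, B ∈ NB G P.S → IsBlock G B ∧ att B ∈ B ∧ ¬ B ⊆ P.S :=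
    fun B hB => ⟨hB.1, hattB hB, hB.2.2⟩
  have tgt_blk : ∀ ⦃B⦄, B ∈ NB G P.S →
      IsBlock G (tgt B) ∧ P.f (att B) ∈ tgt B ∧ ¬ tgt B ⊆ P.f '' P.S := by
    intro B hB
    exact (hψ (att B) (hattS hB)).1 hB.1 (hattB hB) hB.2.2
  have tgt_nb : ∀ ⦃B⦄, B ∈ NB G P.S → tgt B ∈ NB G (P.f '' P.S) := by
    intro B hB
    exact ⟨(tgt_blk hB).1, ⟨P.f (att B), (tgt_blk hB).2.1, ⟨att B, hattS hB, rfl⟩⟩,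
      (tgt_blk hB).2.2⟩
  -- the attach point of tgt B is f (att B)
  have tgt_att : ∀ ⦃B⦄, B ∈ NB G P.S → tgt B ∩ (P.f '' P.S) = {P.f (att B)} := by
    intro B hB
    obtain ⟨y, hy⟩ := nb_att P.closed' (tgt_nb hB)
    have hmem : P.f (att B) ∈ tgt B ∩ (P.f '' P.S) :=
      ⟨(tgt_blk hB).2.1, ⟨att B, hattS hB, rfl⟩⟩
    rw [hy] at hmem ⊢
    rw [hmem]
  have tgt_att_eq : ∀ ⦃B⦄, B ∈ NB G P.S → ∀ ⦃y⦄, y ∈ tgt B → y ∈ P.f '' P.S →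
      y = P.f (att B) := by
    intro B hB y h1 h2
    have : y ∈ tgt B ∩ (P.f '' P.S) := ⟨h1, h2⟩
    rw [tgt_att hB] at this
    exact this
  have tgt_inj : ∀ ⦃B C⦄, B ∈ NB G P.S → C ∈ NB G P.S → tgt B = tgt C → B = C := by
    intro B C hB hC heq
    rcases eq_or_ne (att B) (att C) with hatteq | hattne
    · have heq' : ψ (att B) B = ψ (att B) C := by
        rw [htgtdef] at heq
        simp only at heq
        rw [heq, hatteq]
      exact (hψ (att B) (hattS hB)).2.1 hB.1 (hattB hB) hB.2.2 hC.1
        (hatteq ▸ hattB hC) hC.2.2 heq'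
    · exfalso
      have h1 : P.f (att C) ∈ tgt B := heq ▸ (tgt_blk hC).2.1
      have h2 : P.f (att C) = P.f (att B) :=
        tgt_att_eq hB h1 ⟨att C, hattS hC, rfl⟩
      exact hattne (P.inj (hattS hB) (hattS hC) h2.symm)
  have tgt_surj : ∀ ⦃B'⦄, B' ∈ NB G (P.f '' P.S) → ∃ B, B ∈ NB G P.S ∧ tgt B = B' := by
    intro B' hB'
    obtain ⟨y', hy'⟩ := nb_att P.closed' hB'
    have hy'mem : y' ∈ B' ∩ (P.f '' P.S) := by rw [hy']; exact rfl
    obtain ⟨y, hyS, hyf⟩ := hy'mem.2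
    obtain ⟨B, hBblk, hyB, hBS, hψB⟩ := (hψ y hyS).2.2 hB'.1 (hyf ▸ hy'mem.1) hB'.2.2
    have hBnb : B ∈ NB G P.S := ⟨hBblk, ⟨y, hyB, hyS⟩, hBS⟩
    have hyatt : y = att B := hatt_eq hBnb hyB hyS
    refine ⟨B, hBnb, ?_⟩
    rw [htgtdef]
    simp only
    rw [← hyatt, hψB]
  -- per-block vertex bijections
  have hτex : ∀ B : Set V, ∃ t : V → V, B ∈ NB G P.S →
      Set.BijOn t B (tgt B) ∧ t (att B) = P.f (att B) := by
    intro B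
    by_cases hB : B ∈ NB G P.S
    swap
    · exact ⟨id, fun h => absurd h hB⟩
    obtain ⟨e, he⟩ := equiv_point (HS.card hB.1 (tgt_blk hB).1)
      (⟨att B, hattB hB⟩ : ↥B) (⟨P.f (att B), (tgt_blk hB).2.1⟩ : ↥(tgt B))
    refine ⟨fun z => if hz : z ∈ B then (e ⟨z, hz⟩ : V) else z, fun _ => ⟨⟨?_, ?_, ?_⟩, ?_⟩⟩
    · intro z hz
      simp only [dif_pos hz]
      exact (e ⟨z, hz⟩).2
    · intro z hz w hw heq
      simp only [dif_pos hz, dif_pos hw] at heq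
      have := e.injective (Subtype.ext heq)
      exact congrArg Subtype.val this
    · intro y hy
      refine ⟨(e.symm ⟨y, hy⟩ : V), (e.symm ⟨y, hy⟩).2, ?_⟩
      simp only [dif_pos (e.symm ⟨y, hy⟩).2]
      have : (⟨(e.symm ⟨y, hy⟩ : V), (e.symm ⟨y, hy⟩).2⟩ : ↥B) = e.symm ⟨y, hy⟩ :=
        Subtype.ext rfl
      rw [this, Equiv.apply_symm_apply]
    · simp only [dif_pos (hattB hB)]
      rw [show (⟨att B, hattB hB⟩ : ↥B) = ⟨att B, hattB hB⟩ from rfl, he]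
  choose τ hτ using hτex
  -- the extended map
  set Qf : V → V := fun z => if z ∈ P.S then P.f z else
    if h : ∃ B, B ∈ NB G P.S ∧ z ∈ B then τ h.choose z else z with hQfdef
  have Qf_old : ∀ ⦃z⦄, z ∈ P.S → Qf z = P.f z := by
    intro z hz
    rw [hQfdef]
    simp only [if_pos hz]
  have new_unique : ∀ ⦃z⦄, z ∉ P.S → ∀ ⦃B C⦄, B ∈ NB G P.S → C ∈ NB G P.S →
      z ∈ B → z ∈ C → B = C := by
    intro z hz B C hB hC hzB hzC
    exact nb_unique HS P.conn hB hC hzB hzC hz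
  have Qf_new : ∀ ⦃z⦄, z ∉ P.S → ∀ ⦃B⦄, B ∈ NB G P.S → z ∈ B → Qf z = τ B z := by
    intro z hz B hB hzB
    rw [hQfdef]
    simp only [if_neg hz]
    have hex : ∃ D, D ∈ NB G P.S ∧ z ∈ D := ⟨B, hB, hzB⟩
    rw [dif_pos hex]
    have : hex.choose = B := new_unique hz hex.choose_spec.1 hB hex.choose_spec.2 hzB
    rw [this]
  have Qf_img_new : ∀ ⦃B⦄, B ∈ NB G P.S → Qf '' B = tgt B := by
    intro B hB
    apply Set.Subset.antisymm
    · rintro _ ⟨z, hzB, rfl⟩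
      by_cases hz : z ∈ P.S
      · have : z = att B := hatt_eq hB hzB hz
        rw [Qf_old hz, this, ← (hτ B hB).2]
        exact (hτ B hB).1.1 (this ▸ hzB)
      · rw [Qf_new hz hB hzB]
        exact (hτ B hB).1.1 hzB
    · intro y hy
      obtain ⟨z, hzB, hzy⟩ := (hτ B hB).1.2.2 hy
      by_cases hz : z ∈ P.S
      · have hze : z = att B := hatt_eq hB hzB hz
        exact ⟨z, hzB, by rw [Qf_old hz, hze, ← (hτ B hB).2, ← hze]; exact hzy⟩
      · exact ⟨z, hzB, by rw [Qf_new hz hB hzB, hzy]⟩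
  have Qf_img_S : Qf '' P.S = P.f '' P.S := by
    apply Set.image_congr
    intro z hz
    exact Qf_old hz
  have tgt_range : {B' | ∃ B ∈ NB G P.S, tgt B = B'} = NB G (P.f '' P.S) := by
    apply Set.Subset.antisymm
    · rintro B' ⟨B, hB, rfl⟩
      exact tgt_nb hB
    · intro B' hB'
      exact tgt_surj hB'
  have Qf_img_QS : Qf '' extSet G P.S = extSet G (P.f '' P.S) := by
    apply Set.Subset.antisymm
    · rintro _ ⟨z, hz, rfl⟩
      rcases hz with hzS | hzN
      · exact Or.inl (Qf_old hzS ▸ ⟨z, hzS, rfl⟩)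
      · obtain ⟨B, hB, hzB⟩ := Set.mem_sUnion.mp hzN
        have : Qf z ∈ tgt B := Qf_img_new hB ▸ ⟨z, hzB, rfl⟩
        exact Or.inr (Set.mem_sUnion.mpr ⟨tgt B, tgt_nb hB, this⟩)
    · intro y hy
      rcases hy with hyS | hyN
      · obtain ⟨z, hzS, rfl⟩ := hyS
        exact ⟨z, Or.inl hzS, Qf_old hzS⟩
      · obtain ⟨B', hB', hyB'⟩ := Set.mem_sUnion.mp hyN
        obtain ⟨B, hB, rfl⟩ := tgt_surj hB'
        have : y ∈ Qf '' B := (Qf_img_new hB).symm ▸ hyB'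
        obtain ⟨z, hzB, rfl⟩ := this
        exact ⟨z, nb_sub_ext hB hzB, rfl⟩
  have Qf_new_out : ∀ ⦃z⦄, z ∉ P.S → ∀ ⦃B⦄, B ∈ NB G P.S → z ∈ B →
      Qf z ∈ tgt B ∧ Qf z ∉ P.f '' P.S := by
    intro z hz B hB hzB
    rw [Qf_new hz hB hzB]
    refine ⟨(hτ B hB).1.1 hzB, fun hmem => ?_⟩
    have h1 : τ B z = P.f (att B) := tgt_att_eq hB ((hτ B hB).1.1 hzB) hmem
    have h2 : τ B z = τ B (att B) := by rw [h1, (hτ B hB).2]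
    have := (hτ B hB).1.2.1 hzB (hattB hB) h2
    exact hz (this ▸ hattS hB)
  have QSconn' : (G.induce (Qf '' extSet G P.S)).Connected := by
    rw [Qf_img_QS]
    exact ext_conn HS P.conn' ⟨P.f u₀, u₀, hu₀, rfl⟩
  have Qinj : Set.InjOn Qf (extSet G P.S) := by
    intro z hz w hw heq
    by_cases hzS : z ∈ P.S
    · by_cases hwS : w ∈ P.S
      · exact P.inj hzS hwS (by rw [← Qf_old hzS, ← Qf_old hwS, heq])
      · exfalso
        obtain ⟨D, hD, hwD⟩ := Set.mem_sUnion.mp (hw.resolve_left hwS)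
        have h1 := (Qf_new_out hwS hD hwD).2
        rw [← heq, Qf_old hzS] at h1
        exact h1 ⟨z, hzS, rfl⟩
    · by_cases hwS : w ∈ P.S
      · exfalso
        obtain ⟨D, hD, hzD⟩ := Set.mem_sUnion.mp (hz.resolve_left hzS)
        have h1 := (Qf_new_out hzS hD hzD).2
        rw [heq, Qf_old hwS] at h1
        exact h1 ⟨w, hwS, rfl⟩
      · obtain ⟨D₁, hD₁, hzD₁⟩ := Set.mem_sUnion.mp (hz.resolve_left hzS)
        obtain ⟨D₂, hD₂, hwD₂⟩ := Set.mem_sUnion.mp (hw.resolve_left hwS)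
        rcases eq_or_ne D₁ D₂ with rfl | hne
        · rw [Qf_new hzS hD₁ hzD₁, Qf_new hwS hD₁ hwD₂] at heq
          exact (hτ D₁ hD₁).1.2.1 hzD₁ hwD₂ heq
        · exfalso
          have h1 := Qf_new_out hzS hD₁ hzD₁
          have h2 := Qf_new_out hwS hD₂ hwD₂
          have : tgt D₁ = tgt D₂ := nb_unique HS P.conn' (tgt_nb hD₁) (tgt_nb hD₂)
            h1.1 (heq ▸ h2.1) h1.2
          exact hne (tgt_inj hD₁ hD₂ this)
  have Qblk : ∀ ⦃B : Set V⦄, IsBlock G B → B ⊆ extSet G P.S → IsBlock G (Qf '' B) := by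
    intro B hB hsub
    rcases ext_block_sub HS P.conn P.closed hB hsub with hBS | hBN
    · have : Qf '' B = P.f '' B := Set.image_congr (fun z hz => Qf_old (hBS hz))
      rw [this]
      exact P.blk hB hBS
    · rw [Qf_img_new hBN]
      exact (tgt_blk hBN).1
  have Qblk' : ∀ ⦃B' : Set V⦄, IsBlock G B' → B' ⊆ Qf '' extSet G P.S →
      ∃ B, IsBlock G B ∧ B ⊆ extSet G P.S ∧ Qf '' B = B' := by
    intro B' hB' hsub
    rw [Qf_img_QS] at hsub
    rcases ext_block_sub HS P.conn' P.closed' hB' hsub with hBS' | hBN'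
    · obtain ⟨B, hB, hBS, hBi⟩ := P.blk' hB' hBS'
      refine ⟨B, hB, hBS.trans ext_mem_T, ?_⟩
      rw [Set.image_congr (fun z hz => Qf_old (hBS hz)), hBi]
    · obtain ⟨B, hB, rfl⟩ := tgt_surj hBN'
      exact ⟨B, hB.1, nb_sub_ext hB, Qf_img_new hB⟩
  have Qclosed' : ∀ ⦃B : Set V⦄, IsBlock G B → ∀ ⦃p q : V⦄, p ∈ B → q ∈ B → p ≠ q →
      p ∈ Qf '' extSet G P.S → q ∈ Qf '' extSet G P.S → B ⊆ Qf '' extSet G P.S := by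
    intro B hB p q hpB hqB hpq hp hq
    rw [Qf_img_QS] at hp hq ⊢
    exact ext_closed HS P.conn' P.closed' hB hpB hqB hpq hp hq
  have Qfrontier : ∀ ⦃x⦄, x ∈ extSet G P.S →
      (∀ ⦃B⦄, IsBlock G B → x ∈ B → B ⊆ extSet G P.S) ∨
      (∀ ⦃B C : Set V⦄, IsBlock G B → IsBlock G C → x ∈ B → x ∈ C →
        B ⊆ extSet G P.S → C ⊆ extSet G P.S → B = C) := by
    intro x hx
    by_cases hxS : x ∈ P.S
    · exact Or.inl (fun B hB hxB => ext_interior hB hxB hxS)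
    · exact Or.inr (fun B C hB hC hxB hxC hBs hCs =>
        ext_frontier HS P.conn P.closed hx hxS hB hC hxB hxC hBs hCs)
  have Qsync : ∀ ⦃x⦄, x ∈ extSet G P.S →
      ((∀ ⦃B⦄, IsBlock G B → x ∈ B → B ⊆ extSet G P.S) ↔
      (∀ ⦃B'⦄, IsBlock G B' → Qf x ∈ B' → B' ⊆ Qf '' extSet G P.S)) := by
    intro x hx
    by_cases hxS : x ∈ P.S
    · apply iff_of_true
      · exact fun B hB hxB => ext_interior hB hxB hxS
      · intro B' hB' hfx
        rw [Qf_img_QS]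
        rw [Qf_old hxS] at hfx
        exact ext_interior hB' hfx ⟨x, hxS, rfl⟩
    · obtain ⟨D, hD, hxD⟩ := Set.mem_sUnion.mp (hx.resolve_left hxS)
      apply iff_of_false
      · intro hall
        obtain ⟨C, hC, hxC, hCn⟩ := ext_not_interior HS P.conn P.closed hx hxS
        exact hCn (hall hC hxC)
      · intro hall
        have hmem : Qf x ∈ extSet G (P.f '' P.S) :=
          nb_sub_ext (tgt_nb hD) (Qf_new_out hxS hD hxD).1
        obtain ⟨C, hC, hxC, hCn⟩ := ext_not_interior HS P.conn' P.closed' hmem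
          (Qf_new_out hxS hD hxD).2
        apply hCn
        rw [← Qf_img_QS]
        exact hall hC hxC
  refine ⟨⟨extSet G P.S, Qf, ext_conn HS P.conn ⟨u₀, hu₀⟩, QSconn', Qinj,
    fun B hB p q hpB hqB hpq hp hq => ext_closed HS P.conn P.closed hB hpB hqB hpq hp hq,
    Qclosed', Qblk, Qblk', Qfrontier, Qsync⟩, ext_mem_T, fun x hx => Qf_old hx, ?_, ?_⟩
  · intro B hB hBne
    by_cases hBS : B ⊆ P.S
    · exact hBS.trans ext_mem_T
    · exact nb_sub_ext ⟨hB, hBne, hBS⟩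
  · intro B' hB' hBne'
    show B' ⊆ Qf '' extSet G P.S
    rw [Qf_img_QS]
    by_cases hBS' : B' ⊆ P.f '' P.S
    · exact hBS'.trans ext_mem_T
    · exact nb_sub_ext ⟨hB', hBne', hBS'⟩

end PIso

/-- The base partial isomorphism sending `u` to `v`. -/
noncomputable def PIso.base (HS : Setting G) (u v : V) : PIso G where
  S := {u}
  f := fun _ => v
  conn := singleton_induce_connected u
  conn' := by
    rw [Set.image_singleton]
    exact singleton_induce_connected v
  inj := fun p hp q hq _ => by
    rw [Set.mem_singleton_iff.mp hp, Set.mem_singleton_iff.mp hq]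
  closed := by
    intro B hB p q hpB hqB hpq hp hq
    exact absurd (Set.mem_singleton_iff.mp hp ▸ Set.mem_singleton_iff.mp hq ▸ rfl :
      p = q) hpq
  closed' := by
    intro B hB p q hpB hqB hpq hp hq
    rw [Set.image_singleton, Set.mem_singleton_iff] at hp hq
    exact absurd (hp.trans hq.symm) hpq
  blk := by
    intro B hB hsub
    obtain ⟨p, hp, q, hq, hpq⟩ := HS.nt hB
    exact absurd ((Set.mem_singleton_iff.mp (hsub hp)).trans
      (Set.mem_singleton_iff.mp (hsub hq)).symm) hpq
  blk' := by
    intro B' hB' hsub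
    rw [Set.image_singleton] at hsub
    obtain ⟨p, hp, q, hq, hpq⟩ := HS.nt hB'
    exact absurd ((Set.mem_singleton_iff.mp (hsub hp)).trans
      (Set.mem_singleton_iff.mp (hsub hq)).symm) hpq
  frontier := by
    intro x hx
    right
    intro B C hB hC hxB hxC hBs hCs
    obtain ⟨p, hp, q, hq, hpq⟩ := HS.nt hB
    exact absurd ((Set.mem_singleton_iff.mp (hBs hp)).trans
      (Set.mem_singleton_iff.mp (hBs hq)).symm) hpq
  sync := by
    intro x hx
    apply iff_of_false
    · intro hall
      obtain ⟨B, C, ⟨hB, hxB⟩, _, _⟩ := HS.two x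
      obtain ⟨p, hp, q, hq, hpq⟩ := HS.nt hB
      have hsub := hall hB hxB
      exact hpq ((Set.mem_singleton_iff.mp (hsub hp)).trans
        (Set.mem_singleton_iff.mp (hsub hq)).symm)
    · intro hall
      obtain ⟨B, C, ⟨hB, hxB⟩, _, _⟩ := HS.two v
      have hsub := hall hB hxB
      rw [Set.image_singleton] at hsub
      obtain ⟨p, hp, q, hq, hpq⟩ := HS.nt hB
      exact hpq ((Set.mem_singleton_iff.mp (hsub hp)).trans
        (Set.mem_singleton_iff.mp (hsub hq)).symm)

/-- Main transitivity construction. -/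
theorem main (HS : Setting G) (hconn : G.Connected) (u v : V) :
    ∃ α : G ≃g G, α u = v := by
  classical
  choose next h₁ h₂ h₃ h₄ using PIso.extend HS
  let seq : ℕ → PIso G := fun n => Nat.rec (PIso.base HS u v) (fun _ P => next P) n
  have hseq : ∀ n, seq (n + 1) = next (seq n) := fun n => rfl
  have mono : ∀ ⦃m n : ℕ⦄, m ≤ n → (seq m).S ⊆ (seq n).S := by
    intro m n h
    induction n, h using Nat.le_induction with
    | base => exact subset_rfl
    | succ n hmn ih => exact ih.trans (h₁ (seq n))
  have eqLe : ∀ ⦃m n : ℕ⦄, m ≤ n → ∀ ⦃x⦄, x ∈ (seq m).S → (seq n).f x = (seq m).f x := by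
    intro m n h
    induction n, h using Nat.le_induction with
    | base => exact fun x _ => rfl
    | succ n hmn ih =>
      intro x hx
      rw [hseq n, h₂ (seq n) x (mono hmn hx)]
      exact ih hx
  have cov : ∀ z : V, ∃ n, z ∈ (seq n).S := by
    have hstep : ∀ n, ∀ ⦃z y : V⦄, z ∈ (seq n).S → G.Adj z y → y ∈ (seq (n + 1)).S := by
      intro n z y hz hzy
      obtain ⟨B, hB, hzB, hyB⟩ := block_of_edge hzy
      exact h₃ (seq n) hB ⟨z, hzB, hz⟩ hyB
    have hwalk : ∀ ⦃a b : V⦄ (w : G.Walk a b), (∃ n, a ∈ (seq n).S) → ∃ n, b ∈ (seq n).S := by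
      intro a b w
      induction w with
      | nil => exact id
      | cons h p ih =>
        rintro ⟨n, hn⟩
        exact ih ⟨n + 1, hstep n hn h⟩
    intro z
    obtain ⟨w⟩ := hconn.preconnected u z
    exact hwalk w ⟨0, rfl⟩
  have cov' : ∀ z : V, ∃ n, z ∈ (seq n).f '' (seq n).S := by
    have hstep : ∀ n, ∀ ⦃z y : V⦄, z ∈ (seq n).f '' (seq n).S → G.Adj z y →
        y ∈ (seq (n + 1)).f '' (seq (n + 1)).S := by
      intro n z y hz hzy
      obtain ⟨B, hB, hzB, hyB⟩ := block_of_edge hzy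
      exact h₄ (seq n) hB ⟨z, hzB, hz⟩ hyB
    have hwalk : ∀ ⦃a b : V⦄ (w : G.Walk a b), (∃ n, a ∈ (seq n).f '' (seq n).S) →
        ∃ n, b ∈ (seq n).f '' (seq n).S := by
      intro a b w
      induction w with
      | nil => exact id
      | cons h p ih =>
        rintro ⟨n, hn⟩
        exact ih ⟨n + 1, hstep n hn h⟩
    intro z
    obtain ⟨w⟩ := hconn.preconnected v z
    exact hwalk w ⟨0, ⟨u, rfl, rfl⟩⟩
  set F : V → V := fun z => (seq (cov z).choose).f z with hFdef
  have Fcoh : ∀ {z : V} {n : ℕ}, z ∈ (seq n).S → F z = (seq n).f z := by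
    intro z n hn
    rw [hFdef]
    simp only
    have hm := (cov z).choose_spec
    set m := (cov z).choose
    rcases le_total m n with h | h
    · rw [← eqLe h hm]
    · rw [eqLe h hn]
  have Finj : Function.Injective F := by
    intro z w heq
    obtain ⟨n, hn⟩ := cov z
    obtain ⟨m, hm⟩ := cov w
    have hzN : z ∈ (seq (max n m)).S := mono (le_max_left n m) hn
    have hwN : w ∈ (seq (max n m)).S := mono (le_max_right n m) hm
    rw [Fcoh hzN, Fcoh hwN] at heq
    exact (seq (max n m)).inj hzN hwN heq
  have Fsurj : Function.Surjective F := by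
    intro y
    obtain ⟨n, x, hx, hxy⟩ := cov' y
    exact ⟨x, (Fcoh hx).trans hxy⟩
  have Fmem : ∀ {z : V} {n : ℕ}, z ∈ (seq n).S → F z ∈ (seq n).f '' (seq n).S := by
    intro z n hn
    exact ⟨z, hn, (Fcoh hn).symm⟩
  have Fadj : ∀ a b : V, G.Adj (F a) (F b) ↔ G.Adj a b := by
    intro a b
    constructor
    · intro hadj
      obtain ⟨n₀, hn₀⟩ := cov a
      obtain ⟨m₀, hm₀⟩ := cov b
      set n := max n₀ m₀
      have ha : a ∈ (seq n).S := mono (le_max_left _ _) hn₀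
      have hb : b ∈ (seq n).S := mono (le_max_right _ _) hm₀
      obtain ⟨B', hB', hFa, hFb⟩ := block_of_edge hadj
      have hB'sub : B' ⊆ (seq (n + 1)).f '' (seq (n + 1)).S :=
        h₄ (seq n) hB' ⟨F a, hFa, Fmem ha⟩
      obtain ⟨B, hB, hBsub, hBi⟩ := (seq (n + 1)).blk' hB' hB'sub
      have ha1 : a ∈ (seq (n + 1)).S := mono (Nat.le_succ n) ha
      have hb1 : b ∈ (seq (n + 1)).S := mono (Nat.le_succ n) hb
      have haB : a ∈ B := by
        have : (seq (n + 1)).f a ∈ B' := by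
          rw [eqLe (Nat.le_succ n) ha, ← Fcoh ha]
          exact hFa
        rw [← hBi] at this
        obtain ⟨p, hpB, hpf⟩ := this
        rwa [(seq (n + 1)).inj (hBsub hpB) ha1 hpf] at hpB
      have hbB : b ∈ B := by
        have : (seq (n + 1)).f b ∈ B' := by
          rw [eqLe (Nat.le_succ n) hb, ← Fcoh hb]
          exact hFb
        rw [← hBi] at this
        obtain ⟨p, hpB, hpf⟩ := this
        rwa [(seq (n + 1)).inj (hBsub hpB) hb1 hpf] at hpB
      have hab : a ≠ b := fun h => hadj.ne (by rw [h])
      exact HS.complete hB haB hbB hab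
    · intro hadj
      obtain ⟨n₀, hn₀⟩ := cov a
      obtain ⟨m₀, hm₀⟩ := cov b
      set n := max n₀ m₀
      have ha : a ∈ (seq n).S := mono (le_max_left _ _) hn₀
      have hb : b ∈ (seq n).S := mono (le_max_right _ _) hm₀
      obtain ⟨B, hB, haB, hbB⟩ := block_of_edge hadj
      have hBsub : B ⊆ (seq (n + 1)).S := h₃ (seq n) hB ⟨a, haB, ha⟩
      have himg : IsBlock G ((seq (n + 1)).f '' B) := (seq (n + 1)).blk hB hBsub
      have ha1 : a ∈ (seq (n + 1)).S := mono (Nat.le_succ n) ha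
      have hb1 : b ∈ (seq (n + 1)).S := mono (Nat.le_succ n) hb
      have hFa : F a ∈ (seq (n + 1)).f '' B := ⟨a, haB, (Fcoh (n := n + 1) ha1).symm⟩
      have hFb : F b ∈ (seq (n + 1)).f '' B := ⟨b, hbB, (Fcoh (n := n + 1) hb1).symm⟩
      have hne : F a ≠ F b := fun h => hadj.ne (Finj h)
      exact HS.complete himg hFa hFb hne
  refine ⟨⟨Equiv.ofBijective F ⟨Finj, Fsurj⟩, ?_⟩, ?_⟩
  · intro a b
    exact Fadj a b
  · show F u = v
    have : u ∈ (seq 0).S := rfl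
    rw [Fcoh (n := 0) this]
    rfl


end Stmt7

/-- A connected graph with more than one end, all of whose blocks
are complete graphs on `κ` vertices and each of whose vertices lies in exactly
`λ` blocks (`κ, λ ≥ 2`), is vertex-transitive. -/
theorem stmt_7 {V : Type*} (G : SimpleGraph V) (κ lam : Cardinal)
    (hκ : 2 ≤ κ) (hlam : 2 ≤ lam)
    (hconn : G.Connected) (hends : ∃ e₁ e₂ : G.end, e₁ ≠ e₂)
    (hblockcard : ∀ B : Set V, IsBlock G B → #B = κ)
    (hblockcomplete : ∀ B : Set V, IsBlock G B →
      ∀ u ∈ B, ∀ v ∈ B, u ≠ v → G.Adj u v)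
    (hvertex : ∀ v : V, #{B : Set V // IsBlock G B ∧ v ∈ B} = lam) :
    ∀ u v : V, ∃ α : G ≃g G, α u = v := by
  have HS : Stmt7.Setting G := by
    constructor
    · intro B hB
      have h2 : (2 : Cardinal) ≤ #B := (hblockcard B hB).symm ▸ hκ
      have h1 : (1 : Cardinal) < #B := lt_of_lt_of_le one_lt_two h2
      have : Nontrivial ↥B := Cardinal.one_lt_iff_nontrivial.mp h1
      obtain ⟨⟨p, hp⟩, ⟨q, hq⟩, hne⟩ := this.exists_pair_ne
      exact ⟨p, hp, q, hq, fun h => hne (Subtype.ext h)⟩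
    · intro B hB u hu v hv huv
      exact hblockcomplete B hB u hu v hv huv
    · intro B C hB hC
      exact Cardinal.eq.mp ((hblockcard B hB).trans (hblockcard C hC).symm)
    · intro x y
      exact Cardinal.eq.mp ((hvertex x).trans (hvertex y).symm)
    · intro z
      have h2 : (2 : Cardinal) ≤ #{B : Set V // IsBlock G B ∧ z ∈ B} :=
        (hvertex z).symm ▸ hlam
      have h1 : (1 : Cardinal) < #{B : Set V // IsBlock G B ∧ z ∈ B} :=
        lt_of_lt_of_le one_lt_two h2
      have : Nontrivial {B : Set V // IsBlock G B ∧ z ∈ B} :=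
        Cardinal.one_lt_iff_nontrivial.mp h1
      obtain ⟨⟨B, hB⟩, ⟨C, hC⟩, hne⟩ := this.exists_pair_ne
      exact ⟨B, C, hB, hC, fun h => hne (Subtype.ext h)⟩
  intro u v
  exact Stmt7.main HS hconn u v
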